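/- arXiv:2203.11820 — 2 statements merged into one kernel-verified Lean document; each statement's English description precedes it below -/
import Mathlib

section
/- First-order expansion of the iOLS error term for large δ: For all real u ≥ 0 and δ > 0, |log(δ + u) − log(1 + δ) − (u − 1)/(1 + δ)| ≤ (u − 1)²/(2·δ·(1 + δ)). -/
open Real Set

lemma auxA (x : ℝ) (hx : 1 ≤ x) : x - 1 - (x - 1)^2 / 2 ≤ Real.log x := by
  have hmono : MonotoneOn (fun t : ℝ => Real.log t - (t - 1) + (t - 1)^2 / 2) (Set.Ici 1) := by
    apply monotoneOn_of_deriv_nonneg (convex_Ici 1)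
    · apply ContinuousOn.add
      · exact (Real.continuousOn_log.mono (by intro t ht; simp at ht ⊢; linarith)).sub
          (by fun_prop)
      · fun_prop
    · rw [interior_Ici]
      intro t ht
      have ht1 : (1:ℝ) < t := ht
      have h := ((Real.hasDerivAt_log (by linarith : t ≠ 0)).sub
        ((hasDerivAt_id t).sub_const 1)).add
        ((((hasDerivAt_id t).sub_const 1).pow 2).div_const 2)
      exact h.differentiableAt.differentiableWithinAt
    · rw [interior_Ici]
      intro t ht
      have ht1 : (1:ℝ) < t := ht
      have ht0 : (0:ℝ) < t := by linarith
      have h := ((Real.hasDerivAt_log ht0.ne').sub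
        ((hasDerivAt_id t).sub_const 1)).add
        ((((hasDerivAt_id t).sub_const 1).pow 2).div_const 2)
      simp only [id_eq] at h
      rw [show deriv (fun t : ℝ => Real.log t - (t - 1) + (t - 1)^2 / 2) t = _ from h.deriv]
      have hpos : (0:ℝ) ≤ (t-1)^2 / t := by positivity
      convert hpos using 1
      push_cast
      field_simp
      ring
  have h := hmono (by simp : (1:ℝ) ∈ Set.Ici 1) (by exact hx) hx
  simp [Real.log_one] at h
  nlinarith [h]

lemma auxB (y : ℝ) (hy : 1 ≤ y) : Real.log y ≤ (y^2 - 1) / (2 * y) := by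
  have hmono : MonotoneOn (fun t : ℝ => (t^2 - 1) / (2 * t) - Real.log t) (Set.Ici 1) := by
    apply monotoneOn_of_deriv_nonneg (convex_Ici 1)
    · apply ContinuousOn.sub
      · apply ContinuousOn.div (by fun_prop) (by fun_prop)
        intro t ht; simp at ht; positivity
      · exact Real.continuousOn_log.mono (by intro t ht; simp at ht ⊢; linarith)
    · rw [interior_Ici]
      intro t ht
      have ht1 : (1:ℝ) < t := ht
      have ht0 : (0:ℝ) < t := by linarith
      have h := ((((hasDerivAt_id t).pow 2).sub_const 1).div
        ((hasDerivAt_id t).const_mul 2) (by positivity)).sub (Real.hasDerivAt_log ht0.ne')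
      exact h.differentiableAt.differentiableWithinAt
    · rw [interior_Ici]
      intro t ht
      have ht1 : (1:ℝ) < t := ht
      have ht0 : (0:ℝ) < t := by linarith
      have h := ((((hasDerivAt_id t).pow 2).sub_const 1).div
        ((hasDerivAt_id t).const_mul 2) (by positivity)).sub (Real.hasDerivAt_log ht0.ne')
      simp only [id_eq, Pi.pow_apply] at h
      rw [show deriv (fun t : ℝ => (t^2 - 1) / (2 * t) - Real.log t) t = _ from h.deriv]
      have hpos : (0:ℝ) ≤ (t - 1)^2 / (2 * t^2) := by positivity
      convert hpos using 1
      push_cast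
      field_simp
      ring
  have h := hmono (by simp : (1:ℝ) ∈ Set.Ici 1) (by exact hy) hy
  simp [Real.log_one] at h
  linarith [h]

/-- First-order expansion of the iOLS error term for large `δ`. -/
theorem iOLS_error_first_order_bound (u δ : ℝ) (hu : 0 ≤ u) (hδ : 0 < δ) :
    |Real.log (δ + u) - Real.log (1 + δ) - (u - 1) / (1 + δ)| ≤
      (u - 1) ^ 2 / (2 * δ * (1 + δ)) := by
  have h1δ : (0:ℝ) < 1 + δ := by linarith
  have hδu : (0:ℝ) < δ + u := by linarith
  set x : ℝ := (δ + u) / (1 + δ) with hxdef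
  have hx0 : 0 < x := by positivity
  have hlog : Real.log (δ + u) - Real.log (1 + δ) = Real.log x := by
    rw [hxdef, Real.log_div hδu.ne' h1δ.ne']
  have hxm1 : x - 1 = (u - 1) / (1 + δ) := by
    field_simp [hxdef]
    have hx' : x * (1 + δ) = δ + u := by rw [hxdef, div_mul_cancel₀ _ h1δ.ne']
    linarith
  have hle : Real.log x ≤ x - 1 := Real.log_le_sub_one_of_pos hx0
  have hxlb : δ / (1 + δ) ≤ x := by
    rw [hxdef, div_le_div_iff₀ h1δ h1δ]
    nlinarith
  rw [hlog, ← hxm1, abs_sub_comm, abs_of_nonneg (by linarith)]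
  have hsq : (u - 1)^2 = (x - 1)^2 * (1 + δ)^2 := by
    rw [hxm1]; field_simp
  rcases le_or_gt 1 x with hx1 | hx1
  · -- x ≥ 1 : use auxA
    have hA := auxA x hx1
    have : x - 1 - Real.log x ≤ (x - 1)^2 / 2 := by linarith
    refine this.trans ?_
    rw [hsq]
    rw [div_le_div_iff₀ (by norm_num) (by positivity)]
    nlinarith [sq_nonneg (x - 1)]
  · -- x < 1 : use auxB with y = 1/x
    have hy : 1 ≤ 1 / x := by
      rw [le_div_iff₀ hx0]; linarith
    have hB := auxB (1 / x) hy
    have hBlog : Real.log (1 / x) = - Real.log x := by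
      rw [one_div, Real.log_inv]
    rw [hBlog] at hB
    have hB' : x - 1 - Real.log x ≤ (x - 1)^2 / (2 * x) := by
      have h2 : ((1/x)^2 - 1) / (2 * (1/x)) = (1 - x^2) / (2 * x) := by
        field_simp
      rw [h2, le_div_iff₀ (by positivity)] at hB
      rw [le_div_iff₀ (by positivity)]
      nlinarith [hB]
    refine hB'.trans ?_
    rw [hsq, div_le_div_iff₀ (by positivity) (by positivity)]
    have hxlb' : δ ≤ x * (1 + δ) := by
      have := hxlb
      rw [div_le_iff₀ h1δ] at this
      linarith
    nlinarith [sq_nonneg (x-1), hxlb', hx0]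
end

section
/- Pointwise convergence of the iOLS_δ objective to the multiplicative-Poisson objective as δ → ∞: Fix real numbers y ≥ 0 and t. Then the limit as δ → ∞ of (1 + δ)·(log(y + δ·exp(t)) − log(1 + δ) − t) equals y·exp(−t) − 1. -/
open Filter

/-- Pointwise convergence of the rescaled iOLS_δ residual to the
multiplicative-Poisson residual as `δ → ∞`. -/
theorem iOLS_residual_tendsto_poisson (y t : ℝ) (hy : 0 ≤ y) :
    Tendsto
      (fun δ : ℝ =>
        (1 + δ) * (Real.log (y + δ * Real.exp t) - Real.log (1 + δ) - t))
      atTop (nhds (y * Real.exp (-t) - 1)) := by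
  have h := (Real.tendsto_mul_log_one_add_div_atTop (y * Real.exp (-t) - 1)).comp
    (tendsto_atTop_add_const_left atTop (1 : ℝ) tendsto_id)
  refine h.congr' ?_
  filter_upwards [eventually_gt_atTop (0 : ℝ)] with δ hδ
  have h1 : (0:ℝ) < 1 + δ := by linarith
  have het : (0:ℝ) < Real.exp t := Real.exp_pos t
  have h2 : (0:ℝ) < y + δ * Real.exp t := by positivity
  have key : 1 + (y * Real.exp (-t) - 1) / (1 + δ)
      = (y + δ * Real.exp t) * Real.exp (-t) / (1 + δ) := by
    field_simp
    rw [Real.exp_neg]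
    field_simp
    ring
  simp only [Function.comp, id]
  rw [key, Real.log_div (by positivity) h1.ne', Real.log_mul h2.ne' (Real.exp_ne_zero _),
    Real.log_exp]
  ring
end
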